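/- Let F be a field and let i, j be natural numbers. Then ⟨1⟩_i · ⟨1⟩_j = ⟨1⟩_{i ∧ j}. -/

import Mathlib

/-- Trinomial revision, valid without side conditions. -/
lemma trinom (k a m : ℕ) :
    k.choose a * (k - a).choose m = k.choose (a + m) * (a + m).choose a := by
  rcases le_or_gt (a + m) k with h | h
  · have := Nat.choose_mul (n := k) (k := a + m) (s := a) (Nat.le_add_right a m)
    simpa [Nat.add_sub_cancel_left] using this.symm
  · rcases le_or_gt a k with h2 | h2
    · rw [Nat.choose_eq_zero_of_lt h, Nat.choose_eq_zero_of_lt (by omega : k - a < m)]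
      ring
    · rw [Nat.choose_eq_zero_of_lt h, Nat.choose_eq_zero_of_lt h2]
      ring

lemma keyNat (a b k : ℕ) :
    k.choose a * k.choose b =
      ∑ c ∈ Finset.range (a + b + 1), c.choose a * a.choose (a + b - c) * k.choose c := by
  rcases lt_or_ge k a with h | h
  · rw [Nat.choose_eq_zero_of_lt h, Nat.zero_mul]
    refine (Finset.sum_eq_zero fun c hc => ?_).symm
    rcases lt_or_ge c a with h2 | h2
    · rw [Nat.choose_eq_zero_of_lt h2]; ring
    · rw [Nat.choose_eq_zero_of_lt (lt_of_lt_of_le h h2)]; ring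
  · have hb : k.choose b = ∑ m ∈ Finset.range (b + 1), (k - a).choose m * a.choose (b - m) := by
      have h1 := Nat.add_choose_eq (k - a) a b
      rw [Nat.sub_add_cancel h] at h1
      rw [h1, Finset.Nat.sum_antidiagonal_eq_sum_range_succ_mk]
    have hr : ∑ c ∈ Finset.range (a + b + 1), c.choose a * a.choose (a + b - c) * k.choose c
        = ∑ m ∈ Finset.range (b + 1),
            (a + m).choose a * a.choose (a + b - (a + m)) * k.choose (a + m) := by
      have hIco : ∑ c ∈ Finset.Ico a (a + b + 1),
          c.choose a * a.choose (a + b - c) * k.choose c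
          = ∑ m ∈ Finset.range (b + 1),
              (a + m).choose a * a.choose (a + b - (a + m)) * k.choose (a + m) := by
        rw [Finset.sum_Ico_eq_sum_range, show a + b + 1 - a = b + 1 by omega]
      rw [← hIco]
      refine (Finset.sum_subset ?_ ?_).symm
      · intro c hc
        simp only [Finset.mem_Ico, Finset.mem_range] at *
        omega
      · intro c _ hc
        simp only [Finset.mem_Ico, Finset.mem_range] at *
        rw [Nat.choose_eq_zero_of_lt (by omega : c < a)]
        ring
    rw [hb, Finset.mul_sum, hr]
    refine Finset.sum_congr rfl fun m _ => ?_
    have := trinom k a m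
    rw [Nat.add_sub_add_left]
    calc k.choose a * ((k - a).choose m * a.choose (b - m))
        = (k.choose a * (k - a).choose m) * a.choose (b - m) := by ring
      _ = (k.choose (a + m) * (a + m).choose a) * a.choose (b - m) := by rw [this]
      _ = (a + m).choose a * a.choose (b - m) * k.choose (a + m) := by ring

/-- Splitting lemma: if `C(a+b, a) ≠ 0` in `F` and `c ≤ a + b`, then `c = a' + b'` with
`a' ≤ a`, `b' ≤ b` and `C(c, a') ≠ 0` in `F`. -/
lemma exists_split (F : Type*) [Field F] :
    ∀ (d a b c : ℕ), a + b = c + d → (((a + b).choose a : F)) ≠ 0 →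
      ∃ a' b', a' ≤ a ∧ b' ≤ b ∧ a' + b' = c ∧ ((c.choose a' : F)) ≠ 0 := by
  intro d
  induction d with
  | zero =>
    intro a b c habc hne
    exact ⟨a, b, le_refl a, le_refl b, by omega, by rwa [show a + b = c by omega] at hne⟩
  | succ d ih =>
    intro a b c habc hne
    obtain ⟨a', b', ha', hb', hab', hcne⟩ := ih a b (c + 1) (by omega) hne
    rcases Nat.eq_zero_or_pos a' with rfl | hpos
    · refine ⟨0, c, Nat.zero_le _, by omega, by omega, by simp⟩
    · obtain ⟨k, rfl⟩ := Nat.exists_eq_succ_of_ne_zero (Nat.pos_iff_ne_zero.mp hpos)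
      have hpascal : ((c + 1).choose (k + 1) : F) = (c.choose k : F) + (c.choose (k + 1) : F) := by
        rw [Nat.choose_succ_succ]; push_cast; ring
      by_cases h1 : (c.choose k : F) ≠ 0
      · exact ⟨k, b', by omega, hb', by omega, h1⟩
      · have h2 : (c.choose (k + 1) : F) ≠ 0 := by
          intro h2; apply hcne; rw [hpascal, h2, not_not.mp h1, add_zero]
        have hk : k + 1 ≤ c := by
          by_contra hk
          exact h2 (by rw [Nat.choose_eq_zero_of_lt (by omega)]; simp)
        refine ⟨k + 1, b' - 1, ha', by omega, by omega, h2⟩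

open scoped Classical in
/-- For positive integers `s`, `t`, `wedge F s t` is the largest value of `i + j + 1` over
pairs `0 ≤ i ≤ s-1`, `0 ≤ j ≤ t-1` such that the binomial coefficient `C(i+j, i)`, viewed
as an element of `F`, is nonzero; moreover `wedge F s 0 = wedge F 0 t = 0`. -/
noncomputable def wedge (F : Type*) [Field F] (s t : ℕ) : ℕ :=
  ((Finset.range s) ×ˢ (Finset.range t)).sup
    (fun p => if (((p.1 + p.2).choose p.1 : F)) ≠ 0 then p.1 + p.2 + 1 else 0)

open scoped Classical in
/-- `geomSpace F lam s` is the subspace `⟨λ⟩ₛ` of the `F`-algebra of sequences `ℕ → F`: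
for `λ ≠ 0` it is spanned by the sequences `k ↦ C(k, i) * λ ^ k` for `0 ≤ i ≤ s - 1`;
`⟨0⟩ₛ` is spanned by the Kronecker-delta sequences `k ↦ δ_{i,k}` for `0 ≤ i ≤ s - 1`;
`⟨η⟩₀` is the zero subspace. -/
noncomputable def geomSpace (F : Type*) [Field F] (lam : F) (s : ℕ) : Submodule F (ℕ → F) :=
  if lam = 0 then
    Submodule.span F ((fun i : ℕ => (fun k : ℕ => if k = i then (1 : F) else 0)) '' {i | i < s})
  else
    Submodule.span F ((fun i : ℕ => (fun k : ℕ => (k.choose i : F) * lam ^ k)) '' {i | i < s})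

/-- Let `F` be a field and `i`, `j` natural numbers. Then `⟨1⟩ᵢ · ⟨1⟩ⱼ = ⟨1⟩_{i ∧ j}`. -/
theorem geomSpace_one_mul (F : Type*) [Field F] (i j : ℕ) :
    geomSpace F 1 i * geomSpace F 1 j = geomSpace F 1 (wedge F i j) := by
  classical
  set f : ℕ → (ℕ → F) := fun n k => (k.choose n : F) with hf
  have hgen : ∀ s : ℕ, geomSpace F 1 s = Submodule.span F (f '' {n | n < s}) := by
    intro s
    rw [geomSpace, if_neg one_ne_zero]
    congr 1
    ext x
    simp [hf]
  set w := wedge F i j with hwdef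
  -- wedge membership characterizations
  have hw1 : ∀ a b : ℕ, a < i → b < j → (((a + b).choose a : F)) ≠ 0 → a + b < w := by
    intro a b ha hb hne
    have hmem : (a, b) ∈ Finset.range i ×ˢ Finset.range j :=
      Finset.mem_product.mpr ⟨Finset.mem_range.mpr ha, Finset.mem_range.mpr hb⟩
    have h2 : a + b + 1 ≤ w := by
      rw [hwdef, wedge]
      refine le_trans ?_ (Finset.le_sup hmem)
      simp [hne]
    omega
  have hw2 : ∀ c : ℕ, c < w →
      ∃ a b, a < i ∧ b < j ∧ a + b = c ∧ ((c.choose a : F)) ≠ 0 := by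
    intro c hc
    rw [hwdef, wedge, Finset.lt_sup_iff] at hc
    obtain ⟨p, hp, hlt⟩ := hc
    rw [Finset.mem_product, Finset.mem_range, Finset.mem_range] at hp
    by_cases hne : (((p.1 + p.2).choose p.1 : F)) ≠ 0
    · rw [if_pos hne] at hlt
      obtain ⟨a', b', ha', hb', hab', hcne⟩ :=
        exists_split F (p.1 + p.2 - c) p.1 p.2 c (by omega) hne
      exact ⟨a', b', by omega, by omega, hab', hcne⟩
    · rw [if_neg hne] at hlt; omega
  -- key product expansion in F
  have hprod : ∀ a b : ℕ, f a * f b =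
      ∑ c ∈ Finset.range (a + b + 1),
        ((c.choose a * a.choose (a + b - c) : ℕ) : F) • f c := by
    intro a b
    funext k
    have := keyNat a b k
    simp only [Pi.mul_apply, Finset.sum_apply, Pi.smul_apply, smul_eq_mul, hf]
    calc ((k.choose a : F)) * (k.choose b : F)
        = ((k.choose a * k.choose b : ℕ) : F) := by push_cast; ring
      _ = _ := by rw [this]; push_cast; ring
  refine le_antisymm ?_ ?_
  -- ⊆ : product is contained in geomSpace w
  · rw [hgen i, hgen j, Submodule.span_mul_span]
    rw [Submodule.span_le]
    rintro x hx
    obtain ⟨y, hy, z, hz, rfl⟩ := Set.mem_mul.mp hx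
    obtain ⟨a, ha, rfl⟩ := hy
    obtain ⟨b, hb, rfl⟩ := hz
    simp only [Set.mem_setOf_eq] at ha hb
    show f a * f b ∈ geomSpace F 1 w
    rw [hprod a b]
    refine Submodule.sum_mem _ fun c hc => ?_
    rw [Finset.mem_range] at hc
    by_cases hco : ((c.choose a * a.choose (a + b - c) : ℕ) : F) = 0
    · rw [hco, zero_smul]; exact Submodule.zero_mem _
    · refine Submodule.smul_mem _ _ ?_
      push_cast at hco
      have h1 : ((c.choose a : F)) ≠ 0 := fun h => hco (by rw [h, zero_mul])
      have h2 : ((a.choose (a + b - c) : F)) ≠ 0 := fun h => hco (by rw [h, mul_zero])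
      have hac : a ≤ c := by
        by_contra hac
        exact h1 (by rw [Nat.choose_eq_zero_of_lt (by omega)]; simp)
      have hcb : a + b - c ≤ a := by
        by_contra hcb
        exact h2 (by rw [Nat.choose_eq_zero_of_lt (by omega)]; simp)
      have hcw : c < w := by
        have := hw1 a (c - a) ha (by omega) (by rwa [show a + (c - a) = c by omega])
        omega
      rw [hgen w]
      exact Submodule.subset_span ⟨c, hcw, rfl⟩
  -- ⊇ : geomSpace w is contained in the product
  · set P := geomSpace F 1 i * geomSpace F 1 j with hP
    have main : ∀ c : ℕ, c < w → f c ∈ P := by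
      intro c
      induction c using Nat.strong_induction_on with
      | _ c IH =>
        intro hc
        obtain ⟨a, b, ha, hb, hab, hne⟩ := hw2 c hc
        have hmem : f a * f b ∈ P := by
          refine Submodule.mul_mem_mul ?_ ?_
          · rw [hgen i]; exact Submodule.subset_span ⟨a, ha, rfl⟩
          · rw [hgen j]; exact Submodule.subset_span ⟨b, hb, rfl⟩
        have hsum := hprod a b
        rw [hab, Finset.sum_range_succ] at hsum
        have hcoef : ((c.choose a * a.choose (c - c) : ℕ) : F) = (c.choose a : F) := by
          simp
        rw [hcoef] at hsum
        have heq : (c.choose a : F) • f c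
            = f a * f b - ∑ c' ∈ Finset.range c,
                ((c'.choose a * a.choose (c - c') : ℕ) : F) • f c' := by
          rw [hsum]; abel
        have hmem2 : (c.choose a : F) • f c ∈ P := by
          rw [heq]
          refine Submodule.sub_mem _ hmem (Submodule.sum_mem _ fun c' hc' => ?_)
          rw [Finset.mem_range] at hc'
          exact Submodule.smul_mem _ _ (IH c' hc' (by omega))
        have := Submodule.smul_mem P ((c.choose a : F))⁻¹ hmem2
        rwa [inv_smul_smul₀ hne] at this
    rw [hgen w, Submodule.span_le]
    rintro x ⟨c, hc, rfl⟩
    exact main c hc
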